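/- arXiv:1609.02790 — 2 statements merged into one kernel-verified Lean document; each statement's English description precedes it below -/
import Mathlib

section
/- Let P be a labeled poset on [p] and s : [p] → ℤ₊. Then the lecture hall order cone C(P,s) is the disjoint union, over all linear extensions π ∈ L(P), of the cones C(P_π, s), where P_π is the labeled chain π₁ ≺ π₂ ≺ ⋯ ≺ π_p. -/
noncomputable section

/-- `f : Fin p → ℝ` is a lecture hall `(P,s)`-partition, where `lt` is the strict order
of the labeled poset and labels are compared via the usual order on `Fin p`. -/
def IsLHPart {p : ℕ} (lt : Fin p → Fin p → Prop) (s : Fin p → ℕ) (f : Fin p → ℝ) : Prop :=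
  (∀ x y, lt x y → f x / (s x : ℝ) ≤ f y / (s y : ℝ)) ∧
  ∀ x y, lt x y → y < x → f x / (s x : ℝ) < f y / (s y : ℝ)

/-- The lecture hall order cone `C(P,s)`. -/
def Cone {p : ℕ} (lt : Fin p → Fin p → Prop) (s : Fin p → ℕ) : Set (Fin p → ℝ) :=
  {f | IsLHPart lt s f ∧ ∀ x, 0 ≤ f x / (s x : ℝ)}

/-- The strict order of the labeled chain `P_π : π₁ ≺ π₂ ≺ ⋯ ≺ π_p`. -/
def chainLt {p : ℕ} (π : Equiv.Perm (Fin p)) : Fin p → Fin p → Prop :=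
  fun x y => π.symm x < π.symm y

/-- The set of linear extensions (Jordan–Hölder set) of a labeled poset. -/
def LinExt {p : ℕ} (P : PartialOrder (Fin p)) : Set (Equiv.Perm (Fin p)) :=
  {π | ∀ i j, P.le (π i) (π j) → i ≤ j}

/-- The "key" of an element: its scaled value paired with its label, lexicographically. -/
def lhKey {p : ℕ} (s : Fin p → ℕ) (f : Fin p → ℝ) (x : Fin p) : ℝ ×ₗ Fin p :=
  toLex (f x / (s x : ℝ), x)

lemma lhKey_injective {p : ℕ} (s : Fin p → ℕ) (f : Fin p → ℝ) :
    Function.Injective (lhKey s f) := by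
  intro a b h
  have := congrArg (fun z => (ofLex z).2) h
  simpa [lhKey] using this

/-- Membership in a chain cone means the key is strictly monotone along the chain. -/
lemma strictMono_key_of_mem {p : ℕ} {s : Fin p → ℕ} {f : Fin p → ℝ}
    {π : Equiv.Perm (Fin p)} (h : IsLHPart (chainLt π) s f) :
    StrictMono (lhKey s f ∘ π) := by
  intro i j hij
  have hc : chainLt π (π i) (π j) := by simpa [chainLt] using hij
  have h1 := h.1 _ _ hc
  have hne : π i ≠ π j := fun e => absurd (π.injective e) hij.ne
  rcases lt_or_eq_of_le h1 with hlt | heq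
  · exact Prod.Lex.lt_iff.2 (Or.inl hlt)
  · refine Prod.Lex.lt_iff.2 (Or.inr ⟨heq, ?_⟩)
    rcases lt_or_gt_of_ne hne with h' | h'
    · exact h'
    · exact absurd (h.2 _ _ hc h') (by rw [heq]; exact lt_irrefl _)

lemma lh_decomp_aux {p : ℕ} (lt' le' : Fin p → Fin p → Prop)
    (hiff : ∀ x y, le' x y ↔ lt' x y ∨ x = y)
    (hirr : ∀ x, ¬ lt' x x) (s : Fin p → ℕ) :
    Cone lt' s =
      (⋃ π ∈ {π : Equiv.Perm (Fin p) | ∀ i j, le' (π i) (π j) → i ≤ j},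
        Cone (chainLt π) s) ∧
    ({π : Equiv.Perm (Fin p) | ∀ i j, le' (π i) (π j) → i ≤ j}).PairwiseDisjoint
      (fun π => Cone (chainLt π) s) := by
  constructor
  · ext f
    simp only [Set.mem_iUnion, exists_prop]
    constructor
    · rintro ⟨⟨h1, h2⟩, h0⟩
      set key := lhKey s f with hkey
      set π := Tuple.sort key with hπ
      have hmono : Monotone (key ∘ π) := Tuple.monotone_sort key
      have hsm : StrictMono (key ∘ π) :=
        hmono.strictMono_of_injective ((lhKey_injective s f).comp π.injective)
      have hklt : ∀ x y : Fin p, lt' x y → key x < key y := by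
        intro x y hxy
        have hle := h1 x y hxy
        have hne : x ≠ y := fun e => hirr y (e ▸ hxy)
        rcases lt_or_eq_of_le hle with hlt | heq
        · exact Prod.Lex.lt_iff.2 (Or.inl hlt)
        · refine Prod.Lex.lt_iff.2 (Or.inr ⟨heq, ?_⟩)
          rcases lt_or_gt_of_ne hne with h' | h'
          · exact h'
          · exact absurd (h2 x y hxy h') (by rw [heq]; exact lt_irrefl _)
      refine ⟨π, ?_, ⟨⟨?_, ?_⟩, h0⟩⟩
      · intro i j hij
        rcases (hiff _ _).1 hij with hlt | he
        · by_contra hij'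
          exact absurd (hsm (lt_of_not_ge hij')) (asymm (hklt _ _ hlt))
        · exact (π.injective he).le
      · intro x y hxy
        have : key x < key y := by
          have := hsm (show π.symm x < π.symm y from hxy)
          simpa using this
        rcases Prod.Lex.lt_iff.1 this with h' | h'
        · exact le_of_lt h'
        · exact le_of_eq h'.1
      · intro x y hxy hyx
        have : key x < key y := by
          have := hsm (show π.symm x < π.symm y from hxy)
          simpa using this
        rcases Prod.Lex.lt_iff.1 this with h' | h'
        · exact h'
        · exact absurd h'.2 (asymm hyx)
    · rintro ⟨π, hπ, ⟨h1, h2⟩, h0⟩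
      have hc : ∀ x y, lt' x y → chainLt π x y := by
        intro x y hxy
        have hle : π.symm x ≤ π.symm y := by
          have := hπ (π.symm x) (π.symm y)
          simp only [Equiv.apply_symm_apply] at this
          exact this ((hiff x y).2 (Or.inl hxy))
        refine lt_of_le_of_ne hle (fun e => ?_)
        have := congrArg π e
        simp only [Equiv.apply_symm_apply] at this
        exact hirr y (this ▸ hxy)
      exact ⟨⟨fun x y hxy => h1 x y (hc x y hxy),
        fun x y hxy hyx => h2 x y (hc x y hxy) hyx⟩, h0⟩
  · intro π hπ σ hσ hne
    rw [Function.onFun, Set.disjoint_left]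
    rintro f ⟨hf1, _⟩ ⟨hf2, _⟩
    apply hne
    have h1 := strictMono_key_of_mem hf1
    have h2 := strictMono_key_of_mem hf2
    have hr : Set.range (lhKey s f ∘ π) = Set.range (lhKey s f ∘ σ) := by
      rw [Set.range_comp, Set.range_comp, π.range_eq_univ, σ.range_eq_univ]
    have := (h1.range_inj h2).1 hr
    ext i
    exact congrArg Fin.val (lhKey_injective s f (congrFun this i))

/-- The lecture hall order cone `C(P,s)` is the disjoint union of the cones `C(P_π,s)`
over all linear extensions `π ∈ L(P)`. -/
theorem lecture_hall_cone_decomposition {p : ℕ} (P : PartialOrder (Fin p))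
    (s : Fin p → ℕ) (hs : ∀ x, 0 < s x) :
    Cone P.lt s = (⋃ π ∈ LinExt P, Cone (chainLt π) s) ∧
    (LinExt P).PairwiseDisjoint fun π => Cone (chainLt π) s := by
  exact lh_decomp_aux P.lt P.le
    (fun x y => ⟨fun h => (@lt_or_eq_of_le _ P x y h),
      fun h => h.elim (fun h' => @le_of_lt _ P.toPreorder _ _ h')
        (fun h' => h' ▸ @le_refl _ P.toPreorder x)⟩)
    (fun x => @lt_irrefl _ P.toPreorder x) s
end
end

section
/- For positive integers p and k, as formal power series in t with coefficients in ℤ[q], one has (∏_{i=0}^{p} (1 − t·q^{ki})) · ∑_{n≥0} [kn+1]_q^p t^n = ∑_{τ ∈ ℤ_k ≀ S_p} t^{des_s(τ)} q^{fmaj(τ)}, i.e., ∑_{n≥0} [kn+1]_q^p t^n = (∑_{τ ∈ ℤ_k ≀ S_p} t^{des_s(τ)} q^{fmaj(τ)}) / ∏_{i=0}^{p} (1 − t q^{ki}). -/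
open scoped Classical

noncomputable section

/-- Descent of `τ = (π,r) ∈ ℤ_k ≀ S_p` at (1-based) position `i`: either
`π_i < π_{i+1}` and `r(π_i) > r(π_{i+1})`, or `π_i > π_{i+1}` and `r(π_i) ≥ r(π_{i+1})`. -/
def IsDescZk {p : ℕ} (π : Equiv.Perm (Fin p)) (r : Fin p → ℕ) (i : ℕ) : Prop :=
  ∃ (h1 : i - 1 < p) (h2 : i < p),
    ((π ⟨i - 1, h1⟩ < π ⟨i, h2⟩ ∧ r (π ⟨i - 1, h1⟩) > r (π ⟨i, h2⟩)) ∨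
     (π ⟨i, h2⟩ < π ⟨i - 1, h1⟩ ∧ r (π ⟨i - 1, h1⟩) ≥ r (π ⟨i, h2⟩)))

/-- `D₁(τ) ⊆ [p-1]`. -/
def D1Zk {p : ℕ} (π : Equiv.Perm (Fin p)) (r : Fin p → ℕ) : Finset ℕ :=
  (Finset.Icc 1 (p - 1)).filter (IsDescZk π r)

/-- `D(τ) = D₁(τ) ∪ {p}` if `r(π_p) > 0`, else `D₁(τ)`. -/
def DZk {p : ℕ} (hp : 0 < p) (π : Equiv.Perm (Fin p)) (r : Fin p → ℕ) : Finset ℕ :=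
  if r (π ⟨p - 1, Nat.sub_lt hp Nat.one_pos⟩) = 0 then D1Zk π r else insert p (D1Zk π r)

/-- `des_s(τ) = |D(τ)|`. -/
def desZk {p : ℕ} (hp : 0 < p) (π : Equiv.Perm (Fin p)) (r : Fin p → ℕ) : ℕ :=
  (DZk hp π r).card

/-- `fmaj(τ) = |r| + k · comaj(τ)`, where `comaj(τ) = ∑_{i ∈ D(τ)} (p - i)`. -/
def fmajZk {p : ℕ} (hp : 0 < p) (k : ℕ) (π : Equiv.Perm (Fin p)) (r : Fin p → ℕ) : ℕ :=
  (∑ x, r x) + k * ∑ i ∈ DZk hp π r, (p - i)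

section Helpers
variable {p : ℕ} {α : Type*} [Preorder α]

lemma strict_aux {u : Fin p → α}
    (H : ∀ a : ℕ, (h : a + 1 < p) → u ⟨a, Nat.lt_of_succ_lt h⟩ < u ⟨a+1, h⟩) :
    StrictMono u := by
  have key : ∀ d : ℕ, ∀ a : Fin p, ∀ (hb : a.val + (d+1) < p), u a < u ⟨a.val + (d+1), hb⟩ := by
    intro d
    induction d with
    | zero =>
        intro a hb
        have := H a.val hb
        have e : (⟨a.val, Nat.lt_of_succ_lt hb⟩ : Fin p) = a := Fin.ext rfl
        rwa [e] at this
    | succ d ih =>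
        intro a hb
        have h1 : a.val + (d+1) < p := by omega
        refine lt_trans (ih a h1) ?_
        have := H (a.val + (d+1)) (by omega : a.val + (d+1) + 1 < p)
        have e1 : (⟨a.val + (d+1), Nat.lt_of_succ_lt (by omega : a.val + (d+1) + 1 < p)⟩ : Fin p)
            = ⟨a.val + (d+1), h1⟩ := Fin.ext rfl
        have e2 : (⟨a.val + (d+1) + 1, by omega⟩ : Fin p) = ⟨a.val + (d+1+1), hb⟩ :=
          by apply Fin.ext; simp only [Fin.val_mk]; omega
        rwa [e1, e2] at this
  intro a b hab
  have hab' : a.val < b.val := hab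
  obtain ⟨d, hd⟩ : ∃ d, b.val = a.val + (d+1) := ⟨b.val - a.val - 1, by omega⟩
  have := key d a (by omega)
  have e : (⟨a.val + (d+1), by omega⟩ : Fin p) = b := by apply Fin.ext; simp only [Fin.val_mk]; omega
  rwa [e] at this

lemma mono_aux {u : Fin p → α}
    (H : ∀ a : ℕ, (h : a + 1 < p) → u ⟨a, Nat.lt_of_succ_lt h⟩ ≤ u ⟨a+1, h⟩) :
    Monotone u := by
  have key : ∀ d : ℕ, ∀ a : Fin p, ∀ (hb : a.val + d < p), u a ≤ u ⟨a.val + d, hb⟩ := by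
    intro d
    induction d with
    | zero =>
        intro a hb
        have e : (⟨a.val + 0, hb⟩ : Fin p) = a := by apply Fin.ext; simp only [Fin.val_mk]; omega
        rw [e]
    | succ d ih =>
        intro a hb
        have h1 : a.val + d < p := by omega
        refine le_trans (ih a h1) ?_
        have := H (a.val + d) (by omega : a.val + d + 1 < p)
        have e1 : (⟨a.val + d, Nat.lt_of_succ_lt (by omega : a.val + d + 1 < p)⟩ : Fin p)
            = ⟨a.val + d, h1⟩ := Fin.ext rfl
        have e2 : (⟨a.val + d + 1, by omega⟩ : Fin p) = ⟨a.val + (d+1), hb⟩ := by apply Fin.ext; simp only [Fin.val_mk]; omega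
        rwa [e1, e2] at this
  intro a b hab
  obtain ⟨d, hd⟩ : ∃ d, b.val = a.val + d := ⟨b.val - a.val, by omega⟩
  have := key d a (by omega)
  have e : (⟨a.val + d, by omega⟩ : Fin p) = b := by apply Fin.ext; simp only [Fin.val_mk]; omega
  rwa [e] at this

end Helpers

section Beta
variable {p : ℕ} (π : Equiv.Perm (Fin p)) (r : Fin p → ℕ)

def betaD (a : ℕ) : ℕ := ((D1Zk π r).filter (· ≤ a)).card

lemma mem_D1_bounds {i : ℕ} (hi : i ∈ D1Zk π r) : 1 ≤ i ∧ i ≤ p - 1 ∧ i < p := by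
  rw [D1Zk, Finset.mem_filter, Finset.mem_Icc] at hi
  obtain ⟨⟨h1, h2⟩, _, hlt, _⟩ := hi
  exact ⟨h1, h2, hlt⟩

lemma betaD_zero : betaD π r 0 = 0 := by
  rw [betaD, Finset.card_eq_zero, Finset.filter_eq_empty_iff]
  intro i hi
  have := mem_D1_bounds π r hi
  omega

lemma betaD_succ (a : ℕ) :
    betaD π r (a+1) = betaD π r a + if (a+1) ∈ D1Zk π r then 1 else 0 := by
  unfold betaD
  split_ifs with h
  · have : (D1Zk π r).filter (· ≤ a + 1) = insert (a+1) ((D1Zk π r).filter (· ≤ a)) := by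
      ext i
      simp only [Finset.mem_filter, Finset.mem_insert]
      constructor
      · rintro ⟨hi, hle⟩
        rcases Nat.lt_or_ge i (a+1) with h' | h'
        · exact Or.inr ⟨hi, by omega⟩
        · exact Or.inl (by omega)
      · rintro (rfl | ⟨hi, hle⟩)
        · exact ⟨h, le_rfl⟩
        · exact ⟨hi, by omega⟩
    rw [this, Finset.card_insert_of_notMem (by simp)]
  · have : (D1Zk π r).filter (· ≤ a + 1) = (D1Zk π r).filter (· ≤ a) := by
      ext i
      simp only [Finset.mem_filter]
      constructor
      · rintro ⟨hi, hle⟩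
        refine ⟨hi, ?_⟩
        rcases Nat.lt_or_ge i (a+1) with h' | h'
        · omega
        · exact absurd (by omega : i = a + 1) (fun he => h (he ▸ hi))
      · rintro ⟨hi, hle⟩; exact ⟨hi, by omega⟩
    rw [this, add_zero]

lemma betaD_le_card (a : ℕ) : betaD π r a ≤ (D1Zk π r).card :=
  Finset.card_filter_le _ _

lemma betaD_eq_card {a : ℕ} (ha : p - 1 ≤ a) : betaD π r a = (D1Zk π r).card := by
  rw [betaD, Finset.filter_true_of_mem]
  intro i hi
  have := mem_D1_bounds π r hi
  omega

lemma betaD_full {a : ℕ} (hfull : betaD π r a = (D1Zk π r).card) {i : ℕ}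
    (hi : i ∈ D1Zk π r) : i ≤ a := by
  have hsub : (D1Zk π r).filter (· ≤ a) = D1Zk π r :=
    Finset.eq_of_subset_of_card_le (Finset.filter_subset _ _) (le_of_eq hfull.symm)
  rw [← hsub, Finset.mem_filter] at hi
  exact hi.2

lemma p_not_mem_D1 (hp : 0 < p) : p ∉ D1Zk π r := by
  intro h
  have := mem_D1_bounds π r h
  omega

lemma desZk_eq (hp : 0 < p) :
    desZk hp π r = (D1Zk π r).card +
      if r (π ⟨p - 1, Nat.sub_lt hp Nat.one_pos⟩) = 0 then 0 else 1 := by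
  rw [desZk, DZk]
  split_ifs with h
  · rw [add_zero]
  · rw [Finset.card_insert_of_notMem (p_not_mem_D1 π r hp)]

lemma comajD_eq (hp : 0 < p) :
    ∑ i ∈ DZk hp π r, (p - i) = ∑ i ∈ D1Zk π r, (p - i) := by
  rw [DZk]
  split_ifs with h
  · rfl
  · rw [Finset.sum_insert (p_not_mem_D1 π r hp)]
    simp

lemma sum_betaD : ∑ a : Fin p, betaD π r a.val = ∑ i ∈ D1Zk π r, (p - i) := by
  unfold betaD
  simp_rw [Finset.card_filter]
  rw [Finset.sum_comm]
  refine Finset.sum_congr rfl fun i hi => ?_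
  have hb := mem_D1_bounds π r hi
  rw [Fin.sum_univ_eq_sum_range (fun j => if i ≤ j then 1 else 0) p]
  rw [← Finset.card_filter]
  have : (Finset.range p).filter (fun j => i ≤ j) = Finset.Ico i p := by
    ext j
    simp only [Finset.mem_filter, Finset.mem_range, Finset.mem_Ico]
    omega
  rw [this, Nat.card_Ico]

end Beta

section Sorting
variable {p k n : ℕ}

def gF (f : Fin p → Fin (k*n+1)) (j : Fin p) : ℕ := (f j : ℕ) / k

def rF (f : Fin p → Fin (k*n+1)) (j : Fin p) : ℕ := (f j : ℕ) % k

def keyf (f : Fin p → Fin (k*n+1)) : Fin p → ℕ ×ₗ ℕ :=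
  fun j => toLex (gF f j, rF f j)

def Fmap (hk : 0 < k) (f : Fin p → Fin (k*n+1)) : Equiv.Perm (Fin p) × (Fin p → Fin k) :=
  (Tuple.sort (keyf f), fun j => ⟨rF f j, Nat.mod_lt _ hk⟩)

/-- the sorting permutation makes `g` weakly increasing -/
lemma gF_mono (f : Fin p → Fin (k*n+1)) :
    Monotone (fun a => gF f (Tuple.sort (keyf f) a)) := by
  intro a b hab
  have h := Tuple.monotone_sort (keyf f) hab
  simp only [Function.comp_apply, keyf] at h
  rw [Prod.Lex.le_iff] at h
  rcases h with h | ⟨h, _⟩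
  · exact le_of_lt h
  · exact le_of_eq h

/-- strictness at descents -/
lemma gF_desc (f : Fin p → Fin (k*n+1)) {i : ℕ}
    (hi : IsDescZk (Tuple.sort (keyf f)) (rF f) i)
    (h1 : i - 1 < p) (h2 : i < p) (h0 : 1 ≤ i) :
    gF f (Tuple.sort (keyf f) ⟨i-1, h1⟩) < gF f (Tuple.sort (keyf f) ⟨i, h2⟩) := by
  obtain ⟨h1', h2', hcase⟩ := hi
  set π := Tuple.sort (keyf f)
  have hmono := Tuple.monotone_sort (keyf f)
  have hle : keyf f (π ⟨i-1, h1⟩) ≤ keyf f (π ⟨i, h2⟩) :=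
    hmono (by simp only [Fin.mk_le_mk]; omega : (⟨i-1,h1⟩ : Fin p) ≤ ⟨i,h2⟩)
  rw [keyf, keyf, Prod.Lex.le_iff] at hle
  rcases hle with hlt | ⟨heq, hr⟩
  · exact hlt
  · exfalso
    simp only [ofLex_toLex] at heq hr
    have hexact : (⟨i-1, h1'⟩ : Fin p) = ⟨i-1, h1⟩ := rfl
    have hexact2 : (⟨i, h2'⟩ : Fin p) = ⟨i, h2⟩ := rfl
    rw [hexact, hexact2] at hcase
    rcases hcase with ⟨hπ, hrgt⟩ | ⟨hπ, hrge⟩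
    · omega
    · have hreq : rF f (π ⟨i-1, h1⟩) = rF f (π ⟨i, h2⟩) := by omega
      have htie := (Tuple.eq_sort_iff.mp (rfl : Tuple.sort (keyf f) = Tuple.sort (keyf f))).2
      have := htie ⟨i-1, h1⟩ ⟨i, h2⟩ (by simp only [Fin.mk_lt_mk]; omega)
        (by simp only [keyf]; exact congrArg toLex (Prod.ext heq hreq))
      exact absurd this (not_lt.mpr (le_of_lt hπ))

/-- backward: a permutation with adjacent strict lex-and-index increase is the sorting perm -/
lemma sort_eq (π : Equiv.Perm (Fin p)) (f : Fin p → Fin (k*n+1))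
    (hadj : ∀ a : ℕ, (h : a + 1 < p) →
      gF f (π ⟨a, Nat.lt_of_succ_lt h⟩) < gF f (π ⟨a+1, h⟩) ∨
      (gF f (π ⟨a, Nat.lt_of_succ_lt h⟩) = gF f (π ⟨a+1, h⟩) ∧
        (rF f (π ⟨a, Nat.lt_of_succ_lt h⟩) < rF f (π ⟨a+1, h⟩) ∨
          (rF f (π ⟨a, Nat.lt_of_succ_lt h⟩) = rF f (π ⟨a+1, h⟩) ∧
            π ⟨a, Nat.lt_of_succ_lt h⟩ < π ⟨a+1, h⟩)))) :
    Tuple.sort (keyf f) = π := by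
  symm
  rw [Tuple.eq_sort_iff]
  have hstrict : StrictMono (fun a => toLex (gF f (π a), toLex (rF f (π a), (π a).val))) := by
    apply strict_aux
    intro a h
    rcases hadj a h with hg | ⟨hg, hr | ⟨hr, hπ⟩⟩
    · exact Prod.Lex.lt_iff.mpr (Or.inl hg)
    · exact Prod.Lex.lt_iff.mpr (Or.inr ⟨hg, Prod.Lex.lt_iff.mpr (Or.inl hr)⟩)
    · exact Prod.Lex.lt_iff.mpr (Or.inr ⟨hg, Prod.Lex.lt_iff.mpr (Or.inr ⟨hr, hπ⟩)⟩)
  constructor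
  · apply mono_aux
    intro a h
    simp only [Function.comp_apply, keyf]
    rw [Prod.Lex.le_iff]
    rcases hadj a h with hg | ⟨hg, hr | ⟨hr, _⟩⟩
    · exact Or.inl hg
    · exact Or.inr ⟨hg, le_of_lt hr⟩
    · exact Or.inr ⟨hg, le_of_eq hr⟩
  · intro a b hab hkey
    have := hstrict hab
    rw [Prod.Lex.lt_iff] at this
    simp only [ofLex_toLex] at this
    simp only [keyf] at hkey
    have hg : gF f (π a) = gF f (π b) ∧ rF f (π a) = rF f (π b) := by
      have := congrArg ofLex hkey
      simp only [ofLex_toLex] at this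
      exact ⟨congrArg Prod.fst this, congrArg Prod.snd this⟩
    rcases this with h' | ⟨_, h'⟩
    · omega
    · rw [Prod.Lex.lt_iff] at h'
      simp only [ofLex_toLex] at h'
      rcases h' with h'' | ⟨_, h''⟩
      · omega
      · exact h''

end Sorting

section Chain
variable {p : ℕ}

lemma rF_chain (π : Equiv.Perm (Fin p)) (r : Fin p → ℕ) :
    ∀ (d a : ℕ) (h : a + d < p),
      (∀ i, a < i → i ≤ a + d → ¬ IsDescZk π r i) →
      r (π ⟨a, by omega⟩) ≤ r (π ⟨a + d, h⟩) := by
  intro d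
  induction d with
  | zero =>
      intro a h _
      have e : (⟨a, by omega⟩ : Fin p) = ⟨a + 0, h⟩ := by
        apply Fin.ext; simp only [Fin.val_mk]; omega
      rw [e]
  | succ d ih =>
      intro a h hno
      have h1 : a + d < p := by omega
      refine le_trans (ih a h1 (fun i hi1 hi2 => hno i hi1 (by omega))) ?_
      have hnd : ¬ IsDescZk π r (a + d + 1) := hno (a+d+1) (by omega) (by omega)
      rw [IsDescZk] at hnd
      push_neg at hnd
      have h1' : a + d + 1 - 1 < p := by omega
      have h2' : a + d + 1 < p := by omega
      have hnd2 := hnd h1' h2'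
      have e1 : (⟨a + d + 1 - 1, h1'⟩ : Fin p) = ⟨a + d, h1⟩ := by
        apply Fin.ext; simp only [Fin.val_mk]; omega
      have e2 : (⟨a + d + 1, h2'⟩ : Fin p) = ⟨a + (d+1), h⟩ := by
        apply Fin.ext; simp only [Fin.val_mk]; omega
      rw [e1, e2] at hnd2
      obtain ⟨hn1, hn2⟩ := hnd2
      have hne : π ⟨a + d, h1⟩ ≠ π ⟨a + (d+1), h⟩ := by
        intro hee
        have := π.injective hee
        rw [Fin.mk.injEq] at this
        omega
      rcases lt_trichotomy (π ⟨a + d, h1⟩) (π ⟨a + (d+1), h⟩) with hlt | heq | hgt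
      · exact hn1 hlt
      · exact absurd heq hne
      · exact le_of_lt (hn2 hgt)

end Chain

section ForwardBounds
variable {p k n : ℕ}

lemma gF_le (hk : 0 < k) (f : Fin p → Fin (k*n+1)) (j : Fin p) : gF f j ≤ n := by
  have h1 : (f j : ℕ) ≤ k * n := Nat.lt_succ_iff.1 (f j).isLt
  have := Nat.div_le_div_right (c := k) h1
  rwa [Nat.mul_div_cancel_left n hk] at this

lemma gF_eq_imp (hk : 0 < k) (f : Fin p → Fin (k*n+1)) (j : Fin p)
    (hg : gF f j = n) : rF f j = 0 := by
  have h1 : (f j : ℕ) ≤ k * n := Nat.lt_succ_iff.1 (f j).isLt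
  have hdm := Nat.div_add_mod ((f j : ℕ)) k
  rw [show (f j : ℕ) / k = gF f j from rfl, hg] at hdm
  have : (f j : ℕ) % k = rF f j := rfl
  omega

lemma betaD_le_gF (f : Fin p → Fin (k*n+1)) :
    ∀ (c : ℕ) (hc : c < p),
      betaD (Tuple.sort (keyf f)) (rF f) c ≤ gF f (Tuple.sort (keyf f) ⟨c, hc⟩) := by
  intro c
  induction c with
  | zero => intro hc; rw [betaD_zero]; omega
  | succ c ih =>
      intro hc
      have hc' : c < p := by omega
      rw [betaD_succ]
      split_ifs with hd
      · have hdesc : IsDescZk (Tuple.sort (keyf f)) (rF f) (c+1) := by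
          rw [D1Zk, Finset.mem_filter] at hd
          exact hd.2
        have := gF_desc f hdesc (by omega : c + 1 - 1 < p) hc (by omega)
        have e : (⟨c + 1 - 1, by omega⟩ : Fin p) = ⟨c, hc'⟩ := by
          apply Fin.ext; simp only [Fin.val_mk]; omega
        rw [e] at this
        have := ih hc'
        omega
      · have hmono := gF_mono f (show (⟨c, hc'⟩ : Fin p) ≤ ⟨c+1, hc⟩ by
          simp only [Fin.mk_le_mk]; omega)
        have := ih hc'
        simp only at hmono
        omega

lemma hfun_mono (f : Fin p → Fin (k*n+1)) :
    Monotone (fun a : Fin p =>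
      gF f (Tuple.sort (keyf f) a) - betaD (Tuple.sort (keyf f)) (rF f) a.val) := by
  apply mono_aux
  intro a h
  simp only [Fin.val_mk]
  have hb1 := betaD_le_gF f a (Nat.lt_of_succ_lt h)
  have hb2 := betaD_le_gF f (a+1) h
  rw [betaD_succ]
  split_ifs with hd
  · have hdesc : IsDescZk (Tuple.sort (keyf f)) (rF f) (a+1) := by
      rw [D1Zk, Finset.mem_filter] at hd
      exact hd.2
    have := gF_desc f hdesc (by omega : a + 1 - 1 < p) h (by omega)
    have e : (⟨a + 1 - 1, by omega⟩ : Fin p) = ⟨a, Nat.lt_of_succ_lt h⟩ := by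
      apply Fin.ext; simp only [Fin.val_mk]; omega
    rw [e] at this
    omega
  · have hmono := gF_mono f (show (⟨a, Nat.lt_of_succ_lt h⟩ : Fin p) ≤ ⟨a+1, h⟩ by
      simp only [Fin.mk_le_mk]; omega)
    simp only at hmono
    omega

/-- For sorted `f` : the number of descents is at most `n`, and the h-values are bounded. -/
lemma hfun_bound (hp : 0 < p) (hk : 0 < k) (f : Fin p → Fin (k*n+1)) :
    desZk hp (Tuple.sort (keyf f)) (rF f) ≤ n ∧
    ∀ a : Fin p,
      gF f (Tuple.sort (keyf f) a) - betaD (Tuple.sort (keyf f)) (rF f) a.val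
        ≤ n - desZk hp (Tuple.sort (keyf f)) (rF f) := by
  set π := Tuple.sort (keyf f) with hπ
  set r := rF f with hr
  have hlastlt : p - 1 < p := Nat.sub_lt hp Nat.one_pos
  have hglast : gF f (π ⟨p-1, hlastlt⟩) ≤ n := gF_le hk f _
  have hβlast : betaD π r (p-1) = (D1Zk π r).card := betaD_eq_card π r le_rfl
  have hβg := betaD_le_gF f (p-1) hlastlt
  rw [← hπ, ← hr] at hβg
  have hdes := desZk_eq π r hp
  have key : desZk hp π r ≤ n ∧
      gF f (π ⟨p-1, hlastlt⟩) - betaD π r (p-1) ≤ n - desZk hp π r := by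
    split_ifs at hdes with h0
    · rw [hβlast] at hβg ⊢
      omega
    · have : gF f (π ⟨p-1, hlastlt⟩) ≠ n := fun he => h0 (gF_eq_imp hk f _ he)
      rw [hβlast] at hβg ⊢
      omega
  refine ⟨key.1, fun a => ?_⟩
  have := hfun_mono f (show a ≤ ⟨p-1, hlastlt⟩ from by
    rw [Fin.le_def]; simp only [Fin.val_mk]; omega)
  rw [← hπ, ← hr] at this
  simp only [Fin.val_mk] at this
  omega

end ForwardBounds

section Backward
variable {p k n : ℕ}

def fbVal (π : Equiv.Perm (Fin p)) (ρ : Fin p → Fin k) (h : Fin p → ℕ) (j : Fin p) : ℕ :=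
  k * (h (π.symm j) + betaD π (fun x => ((ρ x : ℕ))) (π.symm j).val) + (ρ j : ℕ)

lemma mul_bound_helper {A rv : ℕ} (hk : 0 < k) (hA : A + 1 ≤ n) (hrv : rv < k) :
    k * A + rv ≤ k * n := by
  have h1 : k * A + rv + 1 ≤ k * A + k := by omega
  have h2 : k * A + k = k * (A + 1) := by ring
  have h3 : k * (A + 1) ≤ k * n := Nat.mul_le_mul_left k hA
  omega

lemma fbVal_le (hp : 0 < p) (π : Equiv.Perm (Fin p)) (ρ : Fin p → Fin k)
    (hdes : desZk hp π (fun x => ((ρ x : ℕ))) ≤ n)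
    (h : Fin p → ℕ) (hh : ∀ a : Fin p, h a ≤ n - desZk hp π (fun x => ((ρ x : ℕ))))
    (a : Fin p) :
    k * (h a + betaD π (fun x => ((ρ x : ℕ))) a.val) + (ρ (π a) : ℕ) ≤ k * n := by
  set r : Fin p → ℕ := fun x => ((ρ x : ℕ)) with hrdef
  have hk : 0 < k := lt_of_le_of_lt (Nat.zero_le _) (ρ (π a)).isLt
  have hβc := betaD_le_card π r a.val
  have hdeseq := desZk_eq π r hp
  have hlastlt : p - 1 < p := Nat.sub_lt hp Nat.one_pos
  have hha := hh a
  have hrk : (ρ (π a) : ℕ) < k := (ρ (π a)).isLt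
  by_cases hβ : betaD π r a.val = (D1Zk π r).card
  · have hr0 : r (π a) ≤ r (π ⟨p-1, hlastlt⟩) := by
      have hav : a.val ≤ p - 1 := by have := a.isLt; omega
      have hno : ∀ i, a.val < i → i ≤ a.val + (p - 1 - a.val) → ¬ IsDescZk π r i := by
        intro i hi1 hi2 hdesc
        have hmem : i ∈ D1Zk π r := by
          rw [D1Zk, Finset.mem_filter, Finset.mem_Icc]
          exact ⟨⟨by omega, by omega⟩, hdesc⟩
        have := betaD_full π r hβ hmem
        omega
      have hchain := rF_chain π r (p - 1 - a.val) a.val (by omega) hno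
      have e1 : (⟨a.val, by omega⟩ : Fin p) = a := by
        apply Fin.ext; simp only [Fin.val_mk]
      have e2 : (⟨a.val + (p - 1 - a.val), by omega⟩ : Fin p) = ⟨p-1, hlastlt⟩ := by
        apply Fin.ext; simp only [Fin.val_mk]; omega
      rwa [e1, e2] at hchain
    by_cases h0 : r (π ⟨p-1, hlastlt⟩) = 0
    · rw [if_pos h0] at hdeseq
      have hA : h a + betaD π r a.val ≤ n := by omega
      have hra : r (π a) = ((ρ (π a)) : ℕ) := rfl
      have hr00 : ((ρ (π a)) : ℕ) = 0 := by omega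
      have hmul := Nat.mul_le_mul_left k hA
      omega
    · rw [if_neg h0] at hdeseq
      exact mul_bound_helper hk (by omega) hrk
  · split_ifs at hdeseq with h0
    · exact mul_bound_helper hk (by omega) hrk
    · exact mul_bound_helper hk (by omega) hrk

def fb (n : ℕ) (π : Equiv.Perm (Fin p)) (ρ : Fin p → Fin k) (h : Fin p → ℕ) :
    Fin p → Fin (k*n+1) :=
  fun j => ⟨min (fbVal π ρ h j) (k*n), Nat.lt_succ_of_le (min_le_right _ _)⟩

lemma fb_val (hp : 0 < p) (π : Equiv.Perm (Fin p)) (ρ : Fin p → Fin k)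
    (hdes : desZk hp π (fun x => ((ρ x : ℕ))) ≤ n)
    (h : Fin p → ℕ) (hh : ∀ a : Fin p, h a ≤ n - desZk hp π (fun x => ((ρ x : ℕ))))
    (j : Fin p) : ((fb n π ρ h j : Fin (k*n+1)) : ℕ) = fbVal π ρ h j := by
  have := fbVal_le hp π ρ hdes h hh (π.symm j)
  rw [Equiv.apply_symm_apply] at this
  exact min_eq_left this

lemma fb_div_mod (hp : 0 < p) (hk : 0 < k) (π : Equiv.Perm (Fin p)) (ρ : Fin p → Fin k)
    (hdes : desZk hp π (fun x => ((ρ x : ℕ))) ≤ n)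
    (h : Fin p → ℕ) (hh : ∀ a : Fin p, h a ≤ n - desZk hp π (fun x => ((ρ x : ℕ))))
    (j : Fin p) :
    gF (fb n π ρ h) j = h (π.symm j) + betaD π (fun x => ((ρ x : ℕ))) (π.symm j).val ∧
    rF (fb n π ρ h) j = (ρ j : ℕ) := by
  have hv := fb_val hp π ρ hdes h hh j
  have hrk : (ρ j : ℕ) < k := (ρ j).isLt
  constructor
  · rw [gF, hv, fbVal, Nat.mul_add_div hk, Nat.div_eq_of_lt hrk, add_zero]
  · rw [rF, hv, fbVal, Nat.mul_add_mod, Nat.mod_eq_of_lt hrk]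

end Backward

section BackwardSort
variable {p k n : ℕ}

lemma fb_sort (hp : 0 < p) (hk : 0 < k) (π : Equiv.Perm (Fin p)) (ρ : Fin p → Fin k)
    (hdes : desZk hp π (fun x => ((ρ x : ℕ))) ≤ n)
    (h : Fin p → ℕ) (hmono : Monotone h)
    (hh : ∀ a : Fin p, h a ≤ n - desZk hp π (fun x => ((ρ x : ℕ)))) :
    Tuple.sort (keyf (fb n π ρ h)) = π := by
  apply _root_.sort_eq
  intro a hA
  have hA' : a < p := Nat.lt_of_succ_lt hA
  have hdA := fb_div_mod hp hk π ρ hdes h hh (π ⟨a, Nat.lt_of_succ_lt hA⟩)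
  have hdB := fb_div_mod hp hk π ρ hdes h hh (π ⟨a+1, hA⟩)
  rw [Equiv.symm_apply_apply] at hdA hdB
  rw [hdA.1, hdA.2, hdB.1, hdB.2]
  simp only [Fin.val_mk]
  rw [betaD_succ]
  have hmAB : h ⟨a, Nat.lt_of_succ_lt hA⟩ ≤ h ⟨a+1, hA⟩ :=
    hmono (by simp only [Fin.mk_le_mk]; omega)
  split_ifs with hd
  · left; omega
  · have hnd : ¬ IsDescZk π (fun x => ((ρ x : ℕ))) (a+1) := by
      intro hdesc
      exact hd (Finset.mem_filter.mpr
        ⟨Finset.mem_Icc.mpr ⟨by omega, by omega⟩, hdesc⟩)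
    rw [IsDescZk] at hnd
    push_neg at hnd
    have h1' : a + 1 - 1 < p := by omega
    have hnd2 := hnd h1' hA
    have e1 : (⟨a + 1 - 1, h1'⟩ : Fin p) = ⟨a, Nat.lt_of_succ_lt hA⟩ := by
      apply Fin.ext; simp only [Fin.val_mk]; omega
    rw [e1] at hnd2
    obtain ⟨hn1, hn2⟩ := hnd2
    rcases Nat.lt_or_ge (h ⟨a, Nat.lt_of_succ_lt hA⟩) (h ⟨a+1, hA⟩) with hlt | hge
    · left; omega
    · have heqh : h ⟨a, Nat.lt_of_succ_lt hA⟩ = h ⟨a+1, hA⟩ := by omega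
      right
      refine ⟨by omega, ?_⟩
      have hne : π ⟨a, Nat.lt_of_succ_lt hA⟩ ≠ π ⟨a+1, hA⟩ := by
        intro hee
        have := π.injective hee
        rw [Fin.mk.injEq] at this
        omega
      rcases lt_trichotomy (π ⟨a, Nat.lt_of_succ_lt hA⟩) (π ⟨a+1, hA⟩) with hlt' | heq' | hgt'
      · rcases Nat.lt_or_ge ((ρ (π ⟨a, Nat.lt_of_succ_lt hA⟩) : ℕ))
          ((ρ (π ⟨a+1, hA⟩) : ℕ)) with hr | hr
        · exact Or.inl hr
        · exact Or.inr ⟨by have := hn1 hlt'; omega, hlt'⟩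
      · exact absurd heq' hne
      · exact Or.inl (hn2 hgt')

lemma fb_Fmap (hp : 0 < p) (hk : 0 < k) (π : Equiv.Perm (Fin p)) (ρ : Fin p → Fin k)
    (hdes : desZk hp π (fun x => ((ρ x : ℕ))) ≤ n)
    (h : Fin p → ℕ) (hmono : Monotone h)
    (hh : ∀ a : Fin p, h a ≤ n - desZk hp π (fun x => ((ρ x : ℕ)))) :
    Fmap hk (fb n π ρ h) = (π, ρ) := by
  rw [Fmap]
  refine Prod.ext ?_ ?_
  · exact fb_sort hp hk π ρ hdes h hmono hh
  · funext j
    apply Fin.ext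
    exact (fb_div_mod hp hk π ρ hdes h hh j).2

end BackwardSort

abbrev Rz := Polynomial ℤ

/-- `∏` factor. -/
def myFactor (k i : ℕ) : PowerSeries Rz :=
  1 - PowerSeries.C ((Polynomial.X : Rz) ^ (k * i)) * PowerSeries.X

/-- geometric series -/
def geo : PowerSeries Rz := PowerSeries.mk fun _ => 1

lemma one_sub_X_mul_geo : (1 - PowerSeries.X) * geo = 1 := by
  ext n
  rw [sub_mul, one_mul, map_sub]
  cases n with
  | zero => simp [geo]
  | succ m => simp [geo, PowerSeries.coeff_succ_X_mul]

/-- The inverse series for `Zk` wreath Carlitz. -/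
def Gs (k : ℕ) : ℕ → PowerSeries Rz
  | 0 => geo
  | p + 1 => geo * PowerSeries.rescale ((Polynomial.X : Rz) ^ k) (Gs k p)

lemma rescale_C_apply (a b : Rz) :
    PowerSeries.rescale a (PowerSeries.C b) = PowerSeries.C b := by
  ext n
  rw [PowerSeries.coeff_rescale]
  cases n with
  | zero => simp
  | succ m => simp [PowerSeries.coeff_C]

lemma rescale_myFactor (k i : ℕ) :
    PowerSeries.rescale ((Polynomial.X : Rz) ^ k) (myFactor k i) = myFactor k (i + 1) := by
  unfold myFactor
  rw [map_sub, map_one, map_mul, PowerSeries.rescale_X, rescale_C_apply]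
  rw [show PowerSeries.C ((Polynomial.X:Rz)^(k*i)) * (PowerSeries.C ((Polynomial.X:Rz)^k) * PowerSeries.X)
      = PowerSeries.C ((Polynomial.X:Rz)^(k*i) * (Polynomial.X:Rz)^k) * PowerSeries.X by
        rw [map_mul]; ring]
  rw [← pow_add, show k*i+k = k*(i+1) by ring]

lemma prod_myFactor_mul_Gs (k p : ℕ) :
    (∏ i ∈ Finset.range (p + 1), myFactor k i) * Gs k p = 1 := by
  induction p with
  | zero =>
      have : myFactor k 0 = 1 - PowerSeries.X := by simp [myFactor]
      simpa [this, Gs] using one_sub_X_mul_geo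
  | succ p ih =>
      rw [Finset.prod_range_succ', Gs]
      have h1 : ∏ i ∈ Finset.range (p + 1), myFactor k (i + 1)
          = PowerSeries.rescale ((Polynomial.X : Rz) ^ k) (∏ i ∈ Finset.range (p + 1), myFactor k i) := by
        rw [map_prod]
        exact Finset.prod_congr rfl fun i _ => (rescale_myFactor k i).symm
      rw [h1]
      have h0 : myFactor k 0 = 1 - PowerSeries.X := by simp [myFactor]
      calc PowerSeries.rescale ((Polynomial.X : Rz) ^ k) (∏ i ∈ Finset.range (p + 1), myFactor k i) *
            myFactor k 0 * (geo * PowerSeries.rescale ((Polynomial.X : Rz) ^ k) (Gs k p))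
          = (PowerSeries.rescale ((Polynomial.X : Rz) ^ k) (∏ i ∈ Finset.range (p + 1), myFactor k i) *
              PowerSeries.rescale ((Polynomial.X : Rz) ^ k) (Gs k p)) * (myFactor k 0 * geo) := by ring
        _ = 1 := by
            rw [← map_mul, ih, map_one, h0, one_sub_X_mul_geo, one_mul]

def monoSet (p m : ℕ) : Finset (Fin p → Fin (m+1)) := Finset.univ.filter Monotone

lemma mem_monoSet {p m : ℕ} {h : Fin p → Fin (m+1)} : h ∈ monoSet p m ↔ Monotone h := by
  simp [monoSet]

def gc (k p m : ℕ) : Rz := ∑ h ∈ monoSet p m, (Polynomial.X : Rz) ^ (k * ∑ i, (h i : ℕ))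

lemma gc_succ (k p n : ℕ) :
    gc k (p+1) n = ∑ m ∈ Finset.range (n+1), (Polynomial.X : Rz)^(k*m) * gc k p m := by
  unfold gc
  rw [← Finset.sum_fiberwise_of_maps_to
    (g := fun h : Fin (p+1) → Fin (n+1) => (h (Fin.last p)).val)
    (t := Finset.range (n+1)) (fun h _ => Finset.mem_range.2 (h (Fin.last p)).isLt)]
  refine Finset.sum_congr rfl fun m hm => ?_
  have hmn : m ≤ n := Nat.lt_succ_iff.1 (Finset.mem_range.1 hm)
  rw [Finset.mul_sum]
  refine Finset.sum_bij'
    (i := fun h _ => (fun a => ⟨min (h a.castSucc).val m, Nat.lt_succ_of_le (min_le_right _ _)⟩ :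
      Fin p → Fin (m+1)))
    (j := fun h' _ => (fun a : Fin (p+1) =>
      ⟨min (if ha : a.val < p then (h' ⟨a.val, ha⟩).val else m) n,
        Nat.lt_succ_of_le (min_le_right _ _)⟩ : Fin (p+1) → Fin (n+1)))
    ?_ ?_ ?_ ?_ ?_
  · -- hi : membership
    intro h hh
    rw [Finset.mem_filter, mem_monoSet] at hh
    rw [mem_monoSet]
    intro a b hab
    simp only [Fin.mk_le_mk]
    exact min_le_min (by exact_mod_cast hh.1 (Fin.castSucc_le_castSucc_iff.2 hab)) le_rfl
  · -- hj
    intro h' hh'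
    rw [mem_monoSet] at hh'
    rw [Finset.mem_filter, mem_monoSet]
    constructor
    · intro a b hab
      simp only [Fin.mk_le_mk]
      apply min_le_min _ le_rfl
      by_cases ha : a.val < p
      · by_cases hb : b.val < p
        · simp only [dif_pos ha, dif_pos hb]
          exact_mod_cast hh' (by exact_mod_cast hab)
        · simp only [dif_pos ha, dif_neg hb]
          exact Nat.lt_succ_iff.1 (h' ⟨a.val, ha⟩).isLt
      · have hb : ¬ b.val < p := fun hb => ha (lt_of_le_of_lt (Fin.le_iff_val_le_val.1 hab) hb)
        simp [dif_neg ha, dif_neg hb]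
    · -- last value is m
      have : ¬ (Fin.last p).val < p := by simp [Fin.last]
      simp only [dif_neg this]
      omega
  · -- left_inv
    intro h hh
    rw [Finset.mem_filter, mem_monoSet] at hh
    obtain ⟨hmono, hlast⟩ := hh
    funext a
    ext
    simp only
    by_cases ha : a.val < p
    · rw [dif_pos ha]
      simp only [Fin.castSucc_mk, Fin.eta]
      have h1 : (h a).val ≤ m := by
        rw [← hlast]; exact_mod_cast hmono (Fin.le_last _)
      have h2 : (h a).val ≤ n := Nat.lt_succ_iff.1 (h a).isLt
      omega
    · have ha' : a = Fin.last p := by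
        ext; exact Nat.le_antisymm (Nat.lt_succ_iff.1 a.isLt) (Nat.le_of_not_lt ha)
      rw [dif_neg ha, ha', hlast]
      omega
  · -- right_inv
    intro h' hh'
    rw [mem_monoSet] at hh'
    funext a
    ext
    simp only
    rw [dif_pos (show (a.castSucc : ℕ) < p from a.isLt)]
    simp only [Fin.coe_castSucc, Fin.eta]
    have h1 : (h' a).val ≤ m := Nat.lt_succ_iff.1 (h' a).isLt
    omega
  · -- weights
    intro h hh
    rw [Finset.mem_filter, mem_monoSet] at hh
    obtain ⟨hmono, hlast⟩ := hh
    rw [← pow_add, ← Nat.mul_add]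
    congr 2
    rw [Fin.sum_univ_castSucc (f := fun i => ((h i : ℕ)))]
    have : ∀ a : Fin p, (min (h a.castSucc).val m) = (h a.castSucc).val := fun a =>
      min_eq_left (by rw [← hlast]; exact_mod_cast hmono (Fin.le_last _))
    simp only [this, hlast]
    ring

lemma coeff_Gs (k p n : ℕ) : PowerSeries.coeff n (Gs k p) = gc k p n := by
  induction p generalizing n with
  | zero =>
      have huniv : (monoSet 0 n) = Finset.univ := by
        apply Finset.eq_univ_of_forall
        intro h
        simp only [monoSet, Finset.mem_filter, Finset.mem_univ, true_and]
        exact fun a => a.elim0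
      simp [Gs, geo, gc, huniv, Finset.sum_const, Finset.univ_unique]
  | succ p ih =>
      rw [Gs, PowerSeries.coeff_mul, gc_succ]
      have : ∀ x ∈ Finset.HasAntidiagonal.antidiagonal n,
          PowerSeries.coeff x.1 geo *
            PowerSeries.coeff x.2 (PowerSeries.rescale ((Polynomial.X : Rz)^k) (Gs k p))
          = (Polynomial.X : Rz) ^ (k * x.2) * gc k p x.2 := by
        intro x _
        rw [PowerSeries.coeff_rescale, ih, geo, PowerSeries.coeff_mk, one_mul, ← pow_mul]
      rw [Finset.sum_congr rfl this,
        Finset.Nat.sum_antidiagonal_eq_sum_range_succ (fun a b => (Polynomial.X : Rz)^(k*b) * gc k p b)]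
      rw [← Finset.sum_range_reflect (fun b => (Polynomial.X : Rz)^(k*b) * gc k p b) (n+1)]
      refine Finset.sum_congr rfl fun j hj => ?_
      rw [Finset.mem_range] at hj
      congr 2 <;> omega

section Fiber
variable {p k n : ℕ}

lemma Fmap_fst {hk : 0 < k} {f : Fin p → Fin (k*n+1)}
    {τ : Equiv.Perm (Fin p) × (Fin p → Fin k)} (hf : Fmap hk f = τ) :
    τ.1 = Tuple.sort (keyf f) := by rw [← hf]; rfl

lemma Fmap_snd {hk : 0 < k} {f : Fin p → Fin (k*n+1)}
    {τ : Equiv.Perm (Fin p) × (Fin p → Fin k)} (hf : Fmap hk f = τ) :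
    (fun x => ((τ.2 x : ℕ))) = rF f := by rw [← hf]; rfl

lemma des_le_of_mem (hp : 0 < p) {hk : 0 < k} {f : Fin p → Fin (k*n+1)}
    {τ : Equiv.Perm (Fin p) × (Fin p → Fin k)} (hf : Fmap hk f = τ) :
    desZk hp τ.1 (fun x => ((τ.2 x : ℕ))) ≤ n := by
  rw [Fmap_fst hf, Fmap_snd hf]
  exact (hfun_bound hp hk f).1

lemma fiber_sum (hp : 0 < p) (hk : 0 < k) (n : ℕ)
    (τ : Equiv.Perm (Fin p) × (Fin p → Fin k)) :
    ∑ f ∈ Finset.univ.filter (fun f : Fin p → Fin (k*n+1) => Fmap hk f = τ),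
      (Polynomial.X : Rz) ^ (∑ j, ((f j : ℕ))) =
    if desZk hp τ.1 (fun x => ((τ.2 x : ℕ))) ≤ n then
      (Polynomial.X : Rz) ^ (fmajZk hp k τ.1 (fun x => ((τ.2 x : ℕ)))) *
        gc k p (n - desZk hp τ.1 (fun x => ((τ.2 x : ℕ)))) else 0 := by
  by_cases hdes : desZk hp τ.1 (fun x => ((τ.2 x : ℕ))) ≤ n
  swap
  · rw [if_neg hdes,
      Finset.filter_eq_empty_iff.mpr (fun f _ hf => hdes (des_le_of_mem hp hf)),
      Finset.sum_empty]
  rw [if_pos hdes, gc, Finset.mul_sum]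
  set D := desZk hp τ.1 (fun x => ((τ.2 x : ℕ))) with hD
  refine Finset.sum_bij'
    (i := fun f _ => (fun a =>
      ⟨min (gF f (τ.1 a) - betaD τ.1 (fun x => ((τ.2 x : ℕ))) a.val) (n - D),
        Nat.lt_succ_of_le (min_le_right _ _)⟩ : Fin p → Fin (n - D + 1)))
    (j := fun h _ => fb n τ.1 τ.2 (fun a => ((h a : ℕ))))
    ?_ ?_ ?_ ?_ ?_
  · -- hi : lands in monoSet
    intro f hf
    rw [Finset.mem_filter] at hf
    rw [mem_monoSet]
    intro a b hab
    simp only [Fin.mk_le_mk]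
    refine min_le_min ?_ le_rfl
    have := hfun_mono f hab
    simp only at this
    rwa [← Fmap_fst hf.2, ← Fmap_snd hf.2] at this
  · -- hj : lands in fiber
    intro h hh
    rw [mem_monoSet] at hh
    rw [Finset.mem_filter]
    refine ⟨Finset.mem_univ _, ?_⟩
    rw [fb_Fmap hp hk τ.1 τ.2 hdes _ (fun a b hab => hh hab)
      (fun a => Nat.lt_succ_iff.1 (h a).isLt)]
  · -- left_inv
    intro f hf
    rw [Finset.mem_filter] at hf
    have hf2 := hf.2
    funext jx
    apply Fin.ext
    have hhb : ∀ a : Fin p,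
        min (gF f (τ.1 a) - betaD τ.1 (fun x => ((τ.2 x : ℕ))) a.val) (n - D)
          = gF f (τ.1 a) - betaD τ.1 (fun x => ((τ.2 x : ℕ))) a.val := by
      intro a
      refine min_eq_left ?_
      have := (hfun_bound hp hk f).2 a
      rw [← Fmap_fst hf2, ← Fmap_snd hf2] at this
      exact this
    rw [fb_val hp τ.1 τ.2 hdes _ (fun a => min_le_right _ _)]
    rw [fbVal]
    rw [hhb]
    have hβle : betaD τ.1 (fun x => ((τ.2 x : ℕ))) (τ.1.symm jx).val
        ≤ gF f (τ.1 (τ.1.symm jx)) := by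
      have := betaD_le_gF f (τ.1.symm jx).val (τ.1.symm jx).isLt
      rw [← Fmap_fst hf2, ← Fmap_snd hf2] at this
      have e : (⟨(τ.1.symm jx).val, (τ.1.symm jx).isLt⟩ : Fin p) = τ.1.symm jx :=
        Fin.ext rfl
      rwa [e] at this
    rw [Nat.sub_add_cancel hβle, Equiv.apply_symm_apply]
    have hmod : ((τ.2 jx : ℕ)) = rF f jx := congrFun (Fmap_snd hf2) jx
    rw [hmod, gF, rF, Nat.div_add_mod]
  · -- right_inv
    intro h hh
    rw [mem_monoSet] at hh
    funext a
    apply Fin.ext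
    simp only
    have hdm := (fb_div_mod hp hk τ.1 τ.2 hdes (fun a => ((h a : ℕ)))
      (fun a => Nat.lt_succ_iff.1 (h a).isLt) (τ.1 a)).1
    rw [hdm, Equiv.symm_apply_apply, Nat.add_sub_cancel]
    exact min_eq_left (Nat.lt_succ_iff.1 (h a).isLt)
  · -- weights
    intro f hf
    rw [Finset.mem_filter] at hf
    have hf2 := hf.2
    rw [← pow_add]
    congr 1
    have hhb : ∀ a : Fin p,
        min (gF f (τ.1 a) - betaD τ.1 (fun x => ((τ.2 x : ℕ))) a.val) (n - D)
          = gF f (τ.1 a) - betaD τ.1 (fun x => ((τ.2 x : ℕ))) a.val := by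
      intro a
      refine min_eq_left ?_
      have := (hfun_bound hp hk f).2 a
      rw [← Fmap_fst hf2, ← Fmap_snd hf2] at this
      exact this
    have hβle : ∀ a : Fin p,
        betaD τ.1 (fun x => ((τ.2 x : ℕ))) a.val ≤ gF f (τ.1 a) := by
      intro a
      have := betaD_le_gF f a.val a.isLt
      rw [← Fmap_fst hf2, ← Fmap_snd hf2] at this
      have e : (⟨a.val, a.isLt⟩ : Fin p) = a := Fin.ext rfl
      rwa [e] at this
    -- exponent identity
    have e1 : ∑ j, ((f j : ℕ)) = k * (∑ j, gF f j) + ∑ j, rF f j := by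
      rw [Finset.mul_sum, ← Finset.sum_add_distrib]
      exact Finset.sum_congr rfl fun j _ => by rw [gF, rF, Nat.div_add_mod]
    have e2 : ∑ j, gF f j = ∑ a, gF f (τ.1 a) := (Equiv.sum_comp τ.1 (gF f)).symm
    have e3 : ∑ a, gF f (τ.1 a) =
        (∑ a, (gF f (τ.1 a) - betaD τ.1 (fun x => ((τ.2 x : ℕ))) a.val)) +
        ∑ a : Fin p, betaD τ.1 (fun x => ((τ.2 x : ℕ))) a.val := by
      rw [← Finset.sum_add_distrib]
      exact Finset.sum_congr rfl fun a _ => by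
        rw [Nat.sub_add_cancel (hβle a)]
    have e4 : ∑ a : Fin p, betaD τ.1 (fun x => ((τ.2 x : ℕ))) a.val
        = ∑ i ∈ DZk hp τ.1 (fun x => ((τ.2 x : ℕ))), (p - i) := by
      rw [sum_betaD, comajD_eq]
    rw [e1, e2, e3, e4, fmajZk]
    simp only [hhb]
    have e5 : ∑ x, ((τ.2 x : ℕ)) = ∑ j, rF f j :=
      Finset.sum_congr rfl fun x _ => congrFun (Fmap_snd hf2) x
    rw [e5]
    ring
end Fiber

lemma main_id {p k : ℕ} (hp : 0 < p) (hk : 0 < k) (n : ℕ) :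
    (∑ j ∈ Finset.range (k*n+1), (Polynomial.X : Rz)^j)^p =
    ∑ τ ∈ (Finset.univ : Finset (Equiv.Perm (Fin p) × (Fin p → Fin k))),
      (if desZk hp τ.1 (fun x => ((τ.2 x : ℕ))) ≤ n then
        (Polynomial.X : Rz) ^ (fmajZk hp k τ.1 (fun x => ((τ.2 x : ℕ)))) *
          gc k p (n - desZk hp τ.1 (fun x => ((τ.2 x : ℕ)))) else 0) := by
  rw [← Fin.sum_univ_eq_sum_range (fun j => (Polynomial.X : Rz)^j) (k*n+1)]
  have h2 : (∑ j : Fin (k*n+1), (Polynomial.X : Rz)^(j : ℕ))^p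
      = ∑ f : Fin p → Fin (k*n+1), (Polynomial.X : Rz)^(∑ a, ((f a : ℕ))) := by
    calc (∑ j : Fin (k*n+1), (Polynomial.X : Rz)^(j : ℕ))^p
        = ∏ _i : Fin p, (∑ j : Fin (k*n+1), (Polynomial.X : Rz)^(j : ℕ)) := by
          rw [Finset.prod_const, Finset.card_univ, Fintype.card_fin]
      _ = ∑ f ∈ Fintype.piFinset (fun _ : Fin p => (Finset.univ : Finset (Fin (k*n+1)))),
            ∏ i, (Polynomial.X : Rz)^((f i : ℕ)) := Finset.prod_univ_sum _ _
      _ = ∑ f : Fin p → Fin (k*n+1), (Polynomial.X : Rz)^(∑ a, ((f a : ℕ))) := by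
          rw [Fintype.piFinset_univ]
          exact Finset.sum_congr rfl fun f _ => Finset.prod_pow_eq_pow_sum _ _ _
  rw [h2, ← Finset.sum_fiberwise Finset.univ (Fmap hk)
    (fun f : Fin p → Fin (k*n+1) => (Polynomial.X : Rz)^(∑ a, ((f a : ℕ))))]
  exact Finset.sum_congr rfl fun τ _ => fiber_sum hp hk n τ


/-- Carlitz's formula for the wreath product `ℤ_k ≀ S_p` (Chow–Mansour):
`∑_{n ≥ 0} [kn+1]_q^p t^n = (∑_{τ ∈ ℤ_k ≀ S_p} t^{des_s(τ)} q^{fmaj(τ)}) / ∏_{i=0}^p (1 - t q^{ki})`,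
stated multiplied through by `∏_{i=0}^p (1 - t q^{ki})`, as a power series in `t` over `ℤ[q]`. -/
theorem carlitz_wreath_product (p k : ℕ) (hp : 0 < p) (hk : 0 < k) :
    (∏ i ∈ Finset.range (p + 1),
        ((1 : PowerSeries (Polynomial ℤ)) -
          PowerSeries.C ((Polynomial.X : Polynomial ℤ) ^ (k * i)) *
            PowerSeries.X)) *
      PowerSeries.mk (fun n =>
        (∑ j ∈ Finset.range (k * n + 1), (Polynomial.X : Polynomial ℤ) ^ j) ^ p) =
    ∑ τ ∈ (Finset.univ : Finset (Equiv.Perm (Fin p) × (Fin p → Fin k))),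
      PowerSeries.C
          ((Polynomial.X : Polynomial ℤ) ^ fmajZk hp k τ.1 fun x => (τ.2 x : ℕ)) *
        PowerSeries.X ^ desZk hp τ.1 fun x => (τ.2 x : ℕ) := by
  have hfac : (∏ i ∈ Finset.range (p + 1),
      ((1 : PowerSeries (Polynomial ℤ)) -
        PowerSeries.C ((Polynomial.X : Polynomial ℤ) ^ (k * i)) *
          PowerSeries.X)) = ∏ i ∈ Finset.range (p + 1), myFactor k i := rfl
  set S : PowerSeries Rz := ∑ τ ∈ (Finset.univ : Finset (Equiv.Perm (Fin p) × (Fin p → Fin k))),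
      PowerSeries.C
          ((Polynomial.X : Polynomial ℤ) ^ fmajZk hp k τ.1 fun x => (τ.2 x : ℕ)) *
        PowerSeries.X ^ desZk hp τ.1 fun x => (τ.2 x : ℕ) with hS
  have hmk : PowerSeries.mk (fun n =>
      (∑ j ∈ Finset.range (k * n + 1), (Polynomial.X : Polynomial ℤ) ^ j) ^ p)
      = S * Gs k p := by
    apply PowerSeries.ext
    intro n
    rw [PowerSeries.coeff_mk, main_id hp hk n, hS, Finset.sum_mul, map_sum]
    refine Finset.sum_congr rfl fun τ _ => ?_
    rw [mul_assoc, PowerSeries.coeff_C_mul, PowerSeries.coeff_X_pow_mul', coeff_Gs]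
    rw [mul_ite, mul_zero]
  rw [hfac, hmk]
  calc (∏ i ∈ Finset.range (p + 1), myFactor k i) * (S * Gs k p)
      = S * ((∏ i ∈ Finset.range (p + 1), myFactor k i) * Gs k p) := by ring
    _ = S := by rw [prod_myFactor_mul_Gs, mul_one]
end
end
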